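/- Let $u \le w$ and $z \in S_n$ be such that the factorizations $uz$ and $wz$ are length additive, let $\mathbf{w}$ be a reduced word for $w$ and $\mathbf{z}$ a reduced word for $z$. If $\mathbf{u}$ is the positive distinguished subexpression for $u$ in $\mathbf{w}$, then the concatenation of $\mathbf{u}$ with $\mathbf{z}$ is the positive distinguished subexpression for $uz$ in the reduced word $\mathbf{w}\mathbf{z}$. -/

import Mathlib

/-- Coxeter length of a permutation of `Fin n`: the number of inversions. -/
def len {n : ℕ} (u : Equiv.Perm (Fin n)) : ℕ :=
  (Finset.univ.filter fun p : Fin n × Fin n => p.1 < p.2 ∧ u p.2 < u p.1).card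

/-- `w` covers `u` in the strong Bruhat order: `w = u·t` for a transposition `t`
and `ℓ(w) = ℓ(u) + 1`. -/
def BruhatCover {n : ℕ} (u w : Equiv.Perm (Fin n)) : Prop :=
  (∃ i j : Fin n, i ≠ j ∧ w = u * Equiv.swap i j) ∧ len w = len u + 1

/-- The strong Bruhat order on `S_n`. -/
def BruhatLE {n : ℕ} (u w : Equiv.Perm (Fin n)) : Prop :=
  Relation.ReflTransGen BruhatCover u w

/-- The image `u({1,…,k})`, zero-indexed as `u({i : i.val < k})`. -/
def kImage {n : ℕ} (k : ℕ) (u : Equiv.Perm (Fin n)) : Finset (Fin n) :=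
  (Finset.univ.filter fun i : Fin n => i.val < k).image u

/-- `w` is a `k`-cover of `u`: a Bruhat cover with `w({1,…,k}) ≠ u({1,…,k})`. -/
def KBruhatCover {n : ℕ} (k : ℕ) (u w : Equiv.Perm (Fin n)) : Prop :=
  BruhatCover u w ∧ kImage k u ≠ kImage k w

/-- The `k`-Bruhat order on `S_n`: transitive closure of `k`-covers. -/
def KBruhatLE {n : ℕ} (k : ℕ) (u w : Equiv.Perm (Fin n)) : Prop :=
  Relation.ReflTransGen (KBruhatCover k) u w

/-- `z` lies in the Young subgroup `S_k × S_{n-k}`, i.e. `z` fixes the sets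
`{1,…,k}` and `{k+1,…,n}` setwise. -/
def IsYoung {n : ℕ} (k : ℕ) (z : Equiv.Perm (Fin n)) : Prop :=
  ∀ i : Fin n, (z i).val < k ↔ i.val < k

/-- `u` is anti-Grassmannian of type `(k,n)`: decreasing on `{1,…,k}` and on
`{k+1,…,n}` (zero-indexed: on `val < k` and on `k ≤ val`). -/
def AntiGrass {n : ℕ} (k : ℕ) (u : Equiv.Perm (Fin n)) : Prop :=
  (∀ a b : Fin n, a < b → b.val < k → u b < u a) ∧
  (∀ a b : Fin n, a < b → k ≤ a.val → u b < u a)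

/-- The simple transposition `s_i` swapping the (zero-indexed) positions `i`
and `i+1`; junk value `1` when `i+1 ≥ n`. -/
def simpleRefl {n : ℕ} (i : ℕ) : Equiv.Perm (Fin n) :=
  if h : i + 1 < n then Equiv.swap ⟨i, Nat.lt_of_succ_lt h⟩ ⟨i + 1, h⟩ else 1

/-- The product of the word of simple reflections `s_{i_1} ⋯ s_{i_m}` given by
the list `l = [i_1, …, i_m]`. -/
def wordProd {n : ℕ} (l : List ℕ) : Equiv.Perm (Fin n) :=
  (l.map (simpleRefl (n := n))).prod

/-- The product of the subexpression of the word `l` selected by the Boolean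
mask `m`: omitted factors are replaced by the identity. -/
def maskProd {n : ℕ} (l : List ℕ) (m : List Bool) : Equiv.Perm (Fin n) :=
  ((l.zip m).map fun p => if p.2 then simpleRefl (n := n) p.1 else 1).prod

/-- The mask `m` defines a positive distinguished subexpression of the word `l`:
for every position `j`, writing `u_{(j)}` for the product of the first `j`
factors of the subexpression, one has `u_{(j-1)} < u_{(j-1)}·s_{i_j}` in Bruhat
order, i.e. right multiplication by `s_{i_j}` increases length.  (Combined with
distinguishedness `u_{(j)} ≤ u_{(j-1)} s_{i_j}`, which then holds automatically,
this is exactly the definition of a PDS.) -/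
def IsPDS {n : ℕ} (l : List ℕ) (m : List Bool) : Prop :=
  m.length = l.length ∧
  ∀ j : ℕ, j < l.length →
    len ((maskProd (n := n) (l.take j) (m.take j)) * simpleRefl (l.getD j 0)) =
      len (maskProd (n := n) (l.take j) (m.take j)) + 1

lemma swap_adj_lt {n : ℕ} (i : ℕ) (h : i + 1 < n) (p q : Fin n) (hpq : p < q)
    (hne : ¬(p = ⟨i, Nat.lt_of_succ_lt h⟩ ∧ q = ⟨i + 1, h⟩)) :
    Equiv.swap (⟨i, Nat.lt_of_succ_lt h⟩ : Fin n) ⟨i + 1, h⟩ p <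
      Equiv.swap (⟨i, Nat.lt_of_succ_lt h⟩ : Fin n) ⟨i + 1, h⟩ q := by
  simp only [Equiv.swap_apply_def, Fin.lt_def, Fin.ext_iff] at *
  split_ifs <;> simp_all <;> omega
lemma len_mul_swap_adj {n : ℕ} (x : Equiv.Perm (Fin n)) (i : ℕ) (h : i + 1 < n)
    (hx : x ⟨i, Nat.lt_of_succ_lt h⟩ < x ⟨i + 1, h⟩) :
    len (x * Equiv.swap ⟨i, Nat.lt_of_succ_lt h⟩ ⟨i + 1, h⟩) = len x + 1 := by
  set a : Fin n := ⟨i, Nat.lt_of_succ_lt h⟩ with ha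
  set b : Fin n := ⟨i + 1, h⟩ with hb
  set s := Equiv.swap a b with hs
  have hsinv : ∀ p : Fin n, s (s p) = p := fun p => Equiv.swap_apply_self a b p
  have hab : a < b := by simp [ha, hb, Fin.lt_def]
  have key : (Finset.univ.filter fun p : Fin n × Fin n => p.1 < p.2 ∧ (x * s) p.2 < (x * s) p.1)
      = insert (a, b) ((Finset.univ.filter fun p : Fin n × Fin n => p.1 < p.2 ∧ x p.2 < x p.1).image
          fun p => (s p.1, s p.2)) := by
    ext p
    simp only [Finset.mem_insert, Finset.mem_image, Finset.mem_filter, Finset.mem_univ, true_and]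
    simp only [Finset.mem_insert, Finset.mem_image, Finset.mem_filter, Finset.mem_univ,
      true_and, Equiv.Perm.mul_apply]
    constructor
    · rintro ⟨h1, h2⟩
      by_cases hpa : p = (a, b)
      · exact Or.inl hpa
      · refine Or.inr ⟨(s p.1, s p.2), ⟨?_, ?_⟩, ?_⟩
        · have := swap_adj_lt i h p.1 p.2 h1 (by
            intro ⟨e1, e2⟩; exact hpa (Prod.ext e1 e2))
          exact this
        · simpa [hsinv] using h2
        · simp [hsinv]
    · rintro (rfl | ⟨q, ⟨h1, h2⟩, rfl⟩)
      · refine ⟨hab, ?_⟩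
        simpa [hs, Equiv.swap_apply_left, Equiv.swap_apply_right] using hx
      · refine ⟨?_, by simpa [hsinv] using h2⟩
        by_cases hq : q = (a, b)
        · exfalso
          rw [hq] at h2
          exact absurd hx (not_lt.2 h2.le)
        · refine swap_adj_lt i h q.1 q.2 h1 ?_
          rintro ⟨e1, e2⟩
          exact hq (Prod.ext e1 e2)
  have hinj : Function.Injective fun p : Fin n × Fin n => (s p.1, s p.2) := fun p q hpq => by
    simp only [Prod.mk.injEq] at hpq
    exact Prod.ext (s.injective hpq.1) (s.injective hpq.2)
  have hnot : (a, b) ∉ (Finset.univ.filter fun p : Fin n × Fin n =>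
      p.1 < p.2 ∧ x p.2 < x p.1).image fun p => (s p.1, s p.2) := by
    simp only [Finset.mem_image, Finset.mem_filter, Finset.mem_univ, true_and, not_exists]
    rintro q ⟨⟨h1, h2⟩, hq⟩
    simp only [Prod.mk.injEq] at hq
    have e1 : q.1 = b := by
      have := congrArg s hq.1; rwa [hsinv, Equiv.swap_apply_left] at this
    have e2 : q.2 = a := by
      have := congrArg s hq.2; rwa [hsinv, Equiv.swap_apply_right] at this
    rw [e1, e2] at h1
    exact absurd hab (not_lt.2 h1.le)
  unfold len
  rw [key, Finset.card_insert_of_notMem hnot, Finset.card_image_of_injective _ hinj]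
lemma len_mul_simpleRefl {n : ℕ} (x : Equiv.Perm (Fin n)) (i : ℕ) (h : i + 1 < n) :
    len (x * simpleRefl i) = len x + 1 ∨ len x = len (x * simpleRefl i) + 1 := by
  have hs : simpleRefl (n := n) i = Equiv.swap ⟨i, Nat.lt_of_succ_lt h⟩ ⟨i + 1, h⟩ := by
    simp [simpleRefl, h]
  set a : Fin n := ⟨i, Nat.lt_of_succ_lt h⟩
  set b : Fin n := ⟨i + 1, h⟩
  have hab : a ≠ b := by simp [a, b, Fin.ext_iff]
  rcases lt_or_gt_of_ne (fun e => hab (x.injective e) : x a ≠ x b) with hx | hx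
  · exact Or.inl (hs ▸ len_mul_swap_adj x i h hx)
  · right
    have h2 : (x * simpleRefl (n := n) i) a < (x * simpleRefl (n := n) i) b := by
      simp [hs, Equiv.Perm.mul_apply, Equiv.swap_apply_left, Equiv.swap_apply_right, hx]
    have := len_mul_swap_adj (x * simpleRefl i) i h h2
    rw [mul_assoc, hs, Equiv.swap_mul_self, mul_one] at this
    rw [hs]
    exact this
lemma wordProd_append {n : ℕ} (l l' : List ℕ) :
    wordProd (n := n) (l ++ l') = wordProd l * wordProd l' := by
  simp [wordProd]
lemma maskProd_append {n : ℕ} (l l' : List ℕ) (m m' : List Bool) (h : m.length = l.length) :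
    maskProd (n := n) (l ++ l') (m ++ m') = maskProd l m * maskProd l' m' := by
  rw [maskProd, List.zip_append h.symm]
  simp [maskProd]
lemma maskProd_replicate {n : ℕ} (l : List ℕ) :
    maskProd (n := n) l (List.replicate l.length true) = wordProd l := by
  induction l with
  | nil => rfl
  | cons a t ih =>
    simp only [List.length_cons, List.replicate_succ, maskProd, List.zip_cons_cons,
      List.map_cons, List.prod_cons, if_true, wordProd] at *
    rw [ih]
lemma wordProd_take_succ {n : ℕ} (lz : List ℕ) (j : ℕ) (hj : j < lz.length) :
    wordProd (n := n) (lz.take (j + 1)) = wordProd (lz.take j) * simpleRefl (lz.getD j 0) := by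
  rw [List.getD_eq_getElem _ _ hj, ← List.take_concat_get' lz j hj, wordProd_append]
  simp [wordProd]
lemma len_prefix {n : ℕ} (u : Equiv.Perm (Fin n)) (lz : List ℕ)
    (hvz : ∀ i ∈ lz, i + 1 < n)
    (hadd : len (u * wordProd lz) = len u + lz.length) :
    ∀ j, j ≤ lz.length → len (u * wordProd (lz.take j)) = len u + j := by
  have step : ∀ j, j < lz.length → u * wordProd (lz.take (j + 1)) =
      (u * wordProd (lz.take j)) * simpleRefl (lz.getD j 0) := by
    intro j hj
    rw [wordProd_take_succ lz j hj, mul_assoc]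
  have hval : ∀ j, j < lz.length → lz.getD j 0 + 1 < n := by
    intro j hj
    rw [List.getD_eq_getElem _ _ hj]
    exact hvz _ (lz.getElem_mem hj)
  have upper : ∀ j, j ≤ lz.length → len (u * wordProd (lz.take j)) ≤ len u + j := by
    intro j
    induction j with
    | zero => intro _; simp [wordProd]
    | succ j ih =>
      intro hj
      have hj' : j < lz.length := hj
      rw [step j hj']
      rcases len_mul_simpleRefl (u * wordProd (lz.take j)) _ (hval j hj') with h1 | h1 <;>
        (have := ih hj'.le; omega)
  have lower : ∀ d j, j + d = lz.length →
      len (u * wordProd lz) ≤ len (u * wordProd (lz.take j)) + d := by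
    intro d
    induction d with
    | zero =>
      intro j hj
      simp only [Nat.add_zero] at hj
      rw [hj, List.take_length]
      omega
    | succ d ih =>
      intro j hj
      have hj' : j < lz.length := by omega
      have h1 := ih (j + 1) (by omega)
      have h2 : len (u * wordProd (lz.take (j + 1))) ≤ len (u * wordProd (lz.take j)) + 1 := by
        rw [step j hj']
        rcases len_mul_simpleRefl (u * wordProd (lz.take j)) _ (hval j hj') with h | h <;> omega
      omega
  intro j hj
  have h1 := upper j hj
  have h2 := lower (lz.length - j) j (by omega)
  omega

/-- If `u ≤ w`, the factorizations `uz` and `wz` are length additive, `lw` and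
`lz` are reduced words for `w` and `z`, and `m` is the PDS for `u` in `lw`,
then the concatenation of `m` with the all-`true` mask on `lz` is the positive
distinguished subexpression for `uz` in the reduced word `lw ++ lz`. -/
theorem PDS_append {n : ℕ} (u w z : Equiv.Perm (Fin n)) (lw lz : List ℕ) (m : List Bool)
    (hvw : ∀ i ∈ lw, i + 1 < n) (hvz : ∀ i ∈ lz, i + 1 < n)
    (hw : wordProd lw = w) (hredw : len w = lw.length)
    (hz : wordProd lz = z) (hredz : len z = lz.length)
    (huw : BruhatLE u w)
    (hadd1 : len (u * z) = len u + len z) (hadd2 : len (w * z) = len w + len z)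
    (hpds : IsPDS (n := n) lw m) (hm : maskProd (n := n) lw m = u) :
    IsPDS (n := n) (lw ++ lz) (m ++ List.replicate lz.length true) ∧
    maskProd (n := n) (lw ++ lz) (m ++ List.replicate lz.length true) = u * z := by
  obtain ⟨hlen, hcond⟩ := hpds
  have hmain : maskProd (n := n) (lw ++ lz) (m ++ List.replicate lz.length true) = u * z := by
    rw [maskProd_append _ _ _ _ hlen, hm, maskProd_replicate, hz]
  refine ⟨⟨by simp [hlen], ?_⟩, hmain⟩
  have hpre := len_prefix u lz hvz (by rw [hz, ← hredz]; exact hadd1)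
  intro j hj
  rw [List.length_append] at hj
  by_cases hjw : j < lw.length
  · have t1 : (lw ++ lz).take j = lw.take j := by
      rw [List.take_append, Nat.sub_eq_zero_of_le hjw.le]
      simp
    have t2 : (m ++ List.replicate lz.length true).take j = m.take j := by
      rw [List.take_append, hlen, Nat.sub_eq_zero_of_le hjw.le]
      simp
    have t3 : (lw ++ lz).getD j 0 = lw.getD j 0 := by
      rw [List.getD_eq_getElem _ _ (by simp; omega), List.getElem_append_left hjw,
        List.getD_eq_getElem _ _ hjw]
    rw [t1, t2, t3]
    exact hcond j hjw
  · push_neg at hjw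
    set j' := j - lw.length with hj'def
    have hjlt : j' < lz.length := by omega
    have t1 : (lw ++ lz).take j = lw ++ lz.take j' := by
      rw [List.take_append, List.take_of_length_le hjw]
    have t2 : (m ++ List.replicate lz.length true).take j
        = m ++ List.replicate j' true := by
      rw [List.take_append, List.take_of_length_le (hlen ▸ hjw),
        List.take_replicate, hlen, Nat.min_eq_left hjlt.le]
    have t3 : (lw ++ lz).getD j 0 = lz.getD j' 0 := by
      rw [List.getD_eq_getElem _ _ (by simp; omega),
        List.getElem_append_right hjw, List.getD_eq_getElem _ _ hjlt]
    have t4 : maskProd (n := n) (lw ++ lz.take j') (m ++ List.replicate j' true)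
        = u * wordProd (lz.take j') := by
      rw [maskProd_append _ _ _ _ hlen, hm]
      congr 1
      have : List.replicate j' true = List.replicate (lz.take j').length true := by
        simp [Nat.min_eq_left hjlt.le]
      rw [this, maskProd_replicate]
    rw [t1, t2, t3, t4]
    have e1 := hpre j' hjlt.le
    have e2 := hpre (j' + 1) hjlt
    have estep : u * wordProd (lz.take j') * simpleRefl (lz.getD j' 0)
        = u * wordProd (n := n) (lz.take (j' + 1)) := by
      rw [wordProd_take_succ lz j' hjlt, mul_assoc]
    rw [estep, e1, e2]
    omega
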